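/- Let G = ⟨a, b | a^m = b^n = 1, b⁻¹ab = a^r⟩ be a nonabelian group with gcd(m, n) = 1 and r^n ≡ 1 (mod m), and suppose gcd(r − 1, m) > 1 with p^α the largest power of a prime p dividing gcd(r − 1, m) and p^α dividing m. Then the subgroup ⟨a^{m/p^α}⟩ lies in the center of G and G decomposes as a nontrivial direct product. -/

import Mathlib

lemma aux_binom (s : ℤ) : ∀ n : ℕ, (s^2 : ℤ) ∣ (1+s)^n - (1 + n*s)
  | 0 => by simp
  | (n+1) => by
    have ih := aux_binom s n
    have h : (1+s)^(n+1) - (1 + (n+1:ℕ)*s)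
        = (1+s)*((1+s)^n - (1 + n*s)) + s^2 * n := by push_cast; ring
    rw [h]
    exact dvd_add (Dvd.dvd.mul_left ih _) (dvd_mul_right _ _)

lemma aux_npm (m n r p α : ℕ) (hp : p.Prime) (hr0 : 0 < r) (hα1 : 1 ≤ α)
    (hrn : r ^ n ≡ 1 [MOD m]) (hpn : ¬ p ∣ n)
    (hpαs : p ^ α ∣ r - 1)
    (hpαmax : ¬ p ^ (α + 1) ∣ Nat.gcd (r - 1) m) :
    ¬ p ^ (α + 1) ∣ m := by
  intro hd
  set s := r - 1 with hs
  have hrs : r = s + 1 := (Nat.succ_pred_eq_of_pos hr0).symm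
  have hZ1 : (m : ℤ) ∣ (1 : ℤ) - (r : ℤ) ^ n := by
    have := hrn.dvd
    push_cast at this
    exact this
  have hZ2 : ((s : ℤ))^2 ∣ (1 + (s:ℤ))^n - (1 + n * s) := aux_binom s n
  have hps : ((p:ℤ))^(α+1) ∣ ((s:ℤ))^2 := by
    have h1 : ((p:ℤ))^α ∣ (s:ℤ) := by exact_mod_cast Int.natCast_dvd_natCast.mpr hpαs
    have h2 : ((p:ℤ))^(2*α) ∣ ((s:ℤ))^2 := by
      rw [two_mul, pow_add]; rw [sq]; exact mul_dvd_mul h1 h1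
    exact (pow_dvd_pow _ (by omega)).trans h2
  have hpm1 : ((p:ℤ))^(α+1) ∣ (1 : ℤ) - (r : ℤ) ^ n := by
    refine dvd_trans ?_ hZ1
    exact_mod_cast Int.natCast_dvd_natCast.mpr hd
  have hr' : (r : ℤ) = 1 + (s : ℤ) := by rw [hrs]; push_cast; ring
  have hns : ((p:ℤ))^(α+1) ∣ (n : ℤ) * (s : ℤ) := by
    have h3 := dvd_add hpm1 (hps.trans hZ2)
    have h4 : (1 : ℤ) - (r:ℤ)^n + ((1 + (s:ℤ))^n - (1 + n*s)) = -(n * s) := by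
      rw [hr']; ring
    rw [h4] at h3
    exact (dvd_neg).mp h3
  have hnsN : p^(α+1) ∣ s * n := by rw [mul_comm]; exact_mod_cast hns
  have hcop : Nat.Coprime (p^(α+1)) n :=
    Nat.Coprime.pow_left _ (hp.coprime_iff_not_dvd.mpr hpn)
  have hdvds : p^(α+1) ∣ s := hcop.dvd_of_dvd_mul_right hnsN
  exact hpαmax (Nat.dvd_gcd hdvds hd)

lemma aux_center {G : Type*} [Group G] {a b z : G}
    (hgen : Subgroup.closure ({a, b} : Set G) = ⊤)
    (ha : a * z = z * a) (hb : b * z = z * b) : z ∈ Subgroup.center G := by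
  have h1 : Subgroup.closure ({a, b} : Set G) ≤ Subgroup.centralizer {z} := by
    rw [Subgroup.closure_le]
    rintro x (rfl | rfl) <;>
      · rw [SetLike.mem_coe, Subgroup.mem_centralizer_iff]
        rintro h rfl
        first | exact ha.symm | exact hb.symm
  rw [hgen] at h1
  refine Subgroup.mem_center_iff.mpr fun g => ?_
  exact (Subgroup.mem_centralizer_iff.mp (h1 (Subgroup.mem_top g)) z rfl).symm

lemma aux_comm {G : Type*} [Group G] {a b : G}
    (hgen : Subgroup.closure ({a, b} : Set G) = ⊤)
    (hc : a * b = b * a) (x y : G) : x * y = y * x := by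
  have ha : a ∈ Subgroup.center G := aux_center hgen rfl hc.symm
  have hb : b ∈ Subgroup.center G := aux_center hgen hc rfl
  have h1 : Subgroup.closure ({a, b} : Set G) ≤ Subgroup.center G := by
    rw [Subgroup.closure_le]; rintro g (rfl | rfl) <;> assumption
  rw [hgen] at h1
  exact Subgroup.mem_center_iff.mp (h1 (Subgroup.mem_top y)) x

lemma aux_mem_normalizer {G : Type*} [Group G] (S : Set G) (x : G)
    (h1 : ∀ g ∈ S, x * g * x⁻¹ ∈ Subgroup.closure S)
    (h2 : ∀ g ∈ S, x⁻¹ * g * x ∈ Subgroup.closure S) :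
    x ∈ Subgroup.normalizer (Subgroup.closure S : Set G) := by
  have key : ∀ y : G, (∀ g ∈ S, y * g * y⁻¹ ∈ Subgroup.closure S) →
      ∀ h ∈ Subgroup.closure S, y * h * y⁻¹ ∈ Subgroup.closure S := by
    intro y hy h hh
    have hmap : (Subgroup.closure S).map (MulAut.conj y).toMonoidHom ≤ Subgroup.closure S := by
      rw [MonoidHom.map_closure, Subgroup.closure_le]
      rintro w ⟨g, hg, rfl⟩
      simpa using hy g hg
    have : y * h * y⁻¹ ∈ (Subgroup.closure S).map (MulAut.conj y).toMonoidHom :=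
      Subgroup.mem_map.mpr ⟨h, hh, by simp⟩
    exact hmap this
  rw [Subgroup.mem_normalizer_iff]
  intro h
  constructor
  · intro hh; exact key x h1 h hh
  · intro hh
    have h2' : ∀ g ∈ S, x⁻¹ * g * x⁻¹⁻¹ ∈ Subgroup.closure S := by simpa using h2
    have := key x⁻¹ h2' (x * h * x⁻¹) hh
    have e : x⁻¹ * (x * h * x⁻¹) * x⁻¹⁻¹ = h := by group
    rwa [e] at this

lemma aux_normal {G : Type*} [Group G] {a b : G}
    (hgen : Subgroup.closure ({a, b} : Set G) = ⊤)
    (H : Subgroup G) (haH : a ∈ Subgroup.normalizer (H : Set G)) (hbH : b ∈ Subgroup.normalizer (H : Set G)) : H.Normal := by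
  rw [← Subgroup.normalizer_eq_top_iff, eq_top_iff, ← hgen, Subgroup.closure_le]
  rintro x (rfl | rfl) <;> assumption

theorem central_subgroup_and_decomposition_of_gcd_gt_one
    {G : Type*} [Group G] [Finite G] (a b : G) (m n r p α : ℕ)
    (hm : orderOf a = m) (hn : orderOf b = n)
    (hgen : Subgroup.closure ({a, b} : Set G) = ⊤)
    (hconj : b⁻¹ * a * b = a ^ r)
    (hcop : Nat.Coprime m n)
    (hrn : r ^ n ≡ 1 [MOD m])
    (hnonab : ∃ x y : G, x * y ≠ y * x)
    (hgcd : 1 < Nat.gcd (r - 1) m)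
    (hp : p.Prime)
    (hpdvd : p ∣ Nat.gcd (r - 1) m)
    (hpα : p ^ α ∣ Nat.gcd (r - 1) m)
    (hpαmax : ¬ p ^ (α + 1) ∣ Nat.gcd (r - 1) m)
    (hpαm : p ^ α ∣ m) :
    Subgroup.zpowers (a ^ (m / p ^ α)) ≤ Subgroup.center G ∧
      ∃ H K : Subgroup G, H ≠ ⊥ ∧ K ≠ ⊥ ∧ H.Normal ∧ K.Normal ∧
        H ⊓ K = ⊥ ∧ H ⊔ K = ⊤ := by
  -- basic facts
  have hm0 : 0 < m := hm ▸ orderOf_pos a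
  have hn0 : 0 < n := hn ▸ orderOf_pos b
  have ham : a ^ m = 1 := hm ▸ pow_orderOf_eq_one a
  have hbn : b ^ n = 1 := hn ▸ pow_orderOf_eq_one b
  have habne : a * b ≠ b * a := by
    intro hc
    obtain ⟨x, y, hxy⟩ := hnonab
    exact hxy (aux_comm hgen hc x y)
  have hr0 : 0 < r := by
    rcases Nat.eq_zero_or_pos r with h | h
    · subst h
      rw [pow_zero] at hconj
      have ha1 : a = 1 := by
        have : a = b * 1 * b⁻¹ := by rw [← hconj]; group
        simpa using this
      exact absurd (by rw [ha1, one_mul, mul_one]) habne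
    · exact h
  have hα1 : 1 ≤ α := by
    by_contra h
    have : α = 0 := by omega
    subst this
    simp only [zero_add, pow_one] at hpαmax
    exact hpαmax hpdvd
  have hpm : p ∣ m := hpdvd.trans (Nat.gcd_dvd_right _ _)
  have hpn : ¬ p ∣ n := fun h =>
    hp.one_lt.ne' (Nat.eq_one_of_dvd_coprimes hcop hpm h)
  have hpαs : p ^ α ∣ r - 1 := hpα.trans (Nat.gcd_dvd_left _ _)
  have hnpm : ¬ p ^ (α + 1) ∣ m := aux_npm m n r p α hp hr0 hα1 hrn hpn hpαs hpαmax
  -- k and arithmetic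
  set k := m / p ^ α with hkdef
  have hk : p ^ α * k = m := Nat.mul_div_cancel' hpαm
  have hpα0 : 0 < p ^ α := Nat.pow_pos hp.pos
  have hk0 : 0 < k := Nat.div_pos (Nat.le_of_dvd hm0 hpαm) hpα0
  have hkm : k ∣ m := Nat.div_dvd_of_dvd hpαm
  have hpk : ¬ p ∣ k := by
    rintro ⟨c, hc⟩
    exact hnpm ⟨c, by rw [← hk, hc]; ring⟩
  obtain ⟨t, ht⟩ := hpαs
  have hrs : r = (r - 1) + 1 := (Nat.succ_pred_eq_of_pos hr0).symm
  -- conjugation formulas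
  have hab : a * b = b * a ^ r := by
    calc a * b = b * (b⁻¹ * a * b) := by group
      _ = b * a ^ r := by rw [hconj]
  have hconjpow : ∀ j : ℕ, b⁻¹ * a ^ j * b = a ^ (r * j) := by
    intro j
    have h1 : (b⁻¹ * a * b⁻¹⁻¹) ^ j = b⁻¹ * a ^ j * b⁻¹⁻¹ := conj_pow
    rw [inv_inv] at h1
    rw [← h1, hconj, ← pow_mul]
  -- the central element z = a^k
  have hzcomm : b⁻¹ * a ^ k * b = a ^ k := by
    rw [hconjpow k]
    have hexp : r * k = m * t + k := by
      rw [hrs, ht, ← hk]; ring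
    rw [hexp, pow_add, pow_mul, ham, one_pow, one_mul]
  have hbz : b * a ^ k = a ^ k * b := by
    have h : b * (b⁻¹ * a ^ k * b) = a ^ k * b := by group
    rwa [hzcomm] at h
  have haz : a * a ^ k = a ^ k * a := by group
  have hz : a ^ k ∈ Subgroup.center G := aux_center hgen haz hbz
  have hHle : Subgroup.zpowers (a ^ k) ≤ Subgroup.center G := Subgroup.zpowers_le.mpr hz
  refine ⟨hHle, ?_⟩
  -- orders
  have hordz : orderOf (a ^ k) = p ^ α := by
    rw [orderOf_pow, hm, Nat.gcd_eq_right hkm]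
    exact Nat.div_div_self hpαm hm0.ne'
  have hpα1 : 1 < p ^ α := Nat.one_lt_pow (by omega) hp.one_lt
  have hzne : a ^ k ≠ 1 := by
    intro h
    rw [h, orderOf_one] at hordz
    omega
  -- conjugation by b in the other direction
  have hj : ∀ j : ℕ, (b ^ j)⁻¹ * a * b ^ j = a ^ (r ^ j) := by
    intro j
    induction j with
    | zero => simp
    | succ j ih =>
      rw [pow_succ b j]
      calc (b ^ j * b)⁻¹ * a * (b ^ j * b)
          = b⁻¹ * ((b ^ j)⁻¹ * a * b ^ j) * b := by group
        _ = b⁻¹ * a ^ (r ^ j) * b := by rw [ih]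
        _ = a ^ (r * r ^ j) := hconjpow _
        _ = a ^ (r ^ (j + 1)) := by rw [← pow_succ']
  have hbn1 : b ^ (n - 1) = b⁻¹ := by
    have h1 : b ^ (n - 1) * b = 1 := by
      rw [← pow_succ, show n - 1 + 1 = n by omega, hbn]
    exact eq_inv_of_mul_eq_one_left h1
  have hbab : b * a * b⁻¹ = a ^ (r ^ (n - 1)) := by
    have h := hj (n - 1)
    rwa [hbn1, inv_inv] at h
  -- the subgroups
  set K := Subgroup.closure ({a ^ p ^ α, b} : Set G) with hKdef
  have huK : a ^ p ^ α ∈ K := Subgroup.subset_closure (Set.mem_insert _ _)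
  have hbK : b ∈ K := Subgroup.subset_closure (Set.mem_insert_iff.mpr (Or.inr rfl))
  have hasK : a ^ (r - 1) ∈ K := by
    rw [ht, pow_mul]
    exact pow_mem huK t
  have habconj : a * b * a⁻¹ = b * a ^ (r - 1) := by
    have har : a ^ r = a ^ (r - 1) * a := by
      conv_lhs => rw [hrs]
      rw [pow_succ]
    calc a * b * a⁻¹ = b * a ^ r * a⁻¹ := by rw [hab]
      _ = b * (a ^ (r - 1) * a) * a⁻¹ := by rw [har]
      _ = b * a ^ (r - 1) := by group
  have habconj' : a⁻¹ * b * a = b * (a ^ (r - 1))⁻¹ := by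
    rw [eq_mul_inv_iff_mul_eq]
    have h1 : a⁻¹ * (b * a ^ (r - 1)) * a = b := by rw [← habconj]; group
    calc a⁻¹ * b * a * a ^ (r - 1) = a⁻¹ * (b * a ^ (r - 1)) * a := by group
      _ = b := h1
  set A := Subgroup.zpowers (a ^ p ^ α) with hAdef
  set B := Subgroup.zpowers b with hBdef
  have hAK : A ≤ K := Subgroup.zpowers_le.mpr huK
  have hBK : B ≤ K := Subgroup.zpowers_le.mpr hbK
  have hA_cl : A = Subgroup.closure {a ^ p ^ α} := Subgroup.zpowers_eq_closure _
  have hauA : a * a ^ p ^ α * a⁻¹ = a ^ p ^ α := by group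
  have hauA' : a⁻¹ * a ^ p ^ α * a = a ^ p ^ α := by group
  have hbuA : b * a ^ p ^ α * b⁻¹ ∈ A := by
    have h1 : (b * a * b⁻¹) ^ p ^ α = b * a ^ p ^ α * b⁻¹ := conj_pow
    rw [← h1, hbab, ← pow_mul, mul_comm, pow_mul]
    exact pow_mem (Subgroup.mem_zpowers _) _
  have hbuA' : b⁻¹ * a ^ p ^ α * b ∈ A := by
    rw [hconjpow (p ^ α), mul_comm, pow_mul]
    exact pow_mem (Subgroup.mem_zpowers _) r
  have hAnormal : A.Normal := by
    rw [hA_cl]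
    refine aux_normal hgen _ ?_ ?_
    · refine aux_mem_normalizer _ _ ?_ ?_
      · rintro g rfl
        rw [hauA]
        exact Subgroup.subset_closure rfl
      · rintro g rfl
        rw [hauA']
        exact Subgroup.subset_closure rfl
    · refine aux_mem_normalizer _ _ ?_ ?_
      · rintro g rfl
        rw [← hA_cl]
        exact hbuA
      · rintro g rfl
        rw [← hA_cl]
        exact hbuA'
  have hKnormal : K.Normal := by
    refine aux_normal hgen K ?_ (Subgroup.le_normalizer hbK)
    refine aux_mem_normalizer _ _ ?_ ?_
    · rintro g (rfl | rfl)
      · rw [hauA]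
        exact huK
      · rw [habconj]
        exact mul_mem hbK hasK
    · rintro g (rfl | rfl)
      · rw [hauA']
        exact huK
      · rw [habconj']
        exact mul_mem hbK (inv_mem hasK)
  have hKAB : A ⊔ B = K := by
    rw [hAdef, hBdef, Subgroup.zpowers_eq_closure, Subgroup.zpowers_eq_closure,
      ← Subgroup.closure_union, Set.singleton_union]
  set A' := A.subgroupOf K with hA'def
  haveI hA'n : A'.Normal := hAnormal.subgroupOf K
  have hsup' : A' ⊔ B.subgroupOf K = ⊤ := by
    rw [hA'def, ← Subgroup.subgroupOf_sup hAK hBK, hKAB, Subgroup.subgroupOf_self]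
  set b' : K := ⟨b, hbK⟩ with hb'def
  have hB' : B.subgroupOf K = Subgroup.zpowers b' := by
    ext x
    rw [Subgroup.mem_subgroupOf]
    constructor
    · intro hx
      obtain ⟨j, hj⟩ := Subgroup.mem_zpowers_iff.mp hx
      refine Subgroup.mem_zpowers_iff.mpr ⟨j, ?_⟩
      apply Subtype.ext
      rw [SubgroupClass.coe_zpow]
      exact hj
    · intro hx
      obtain ⟨j, hj⟩ := Subgroup.mem_zpowers_iff.mp hx
      refine Subgroup.mem_zpowers_iff.mpr ⟨j, ?_⟩
      calc (b : G) ^ j = ((b' ^ j : K) : G) := SubgroupClass.coe_zpow b' j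
        _ = (x : G) := by rw [hj]
  set π := QuotientGroup.mk' A' with hπdef
  have hmaptop : Subgroup.map π ⊤ = ⊤ := by
    rw [← MonoidHom.range_eq_map, MonoidHom.range_eq_top]
    exact QuotientGroup.mk'_surjective A'
  have htop : (⊤ : Subgroup (K ⧸ A')) = Subgroup.zpowers (π b') := by
    rw [← hmaptop, ← hsup', Subgroup.map_sup,
      (Subgroup.map_eq_bot_iff _).mpr (le_of_eq (QuotientGroup.ker_mk' A').symm),
      hB', MonoidHom.map_zpowers, bot_sup_eq]
  have hcardQ : Nat.card (K ⧸ A') = orderOf (π b') := by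
    rw [← Nat.card_zpowers, ← htop]
    exact (Nat.card_congr Subgroup.topEquiv.toEquiv).symm
  have hordb' : orderOf b' = n := by
    rw [← hn]
    exact (orderOf_injective K.subtype K.subtype_injective b').symm
  have hordπ : orderOf (π b') ∣ n := hordb' ▸ orderOf_map_dvd π b'
  have hcardA : Nat.card A' = k := by
    have h1 : Nat.card A' = Nat.card A := Nat.card_congr (Subgroup.subgroupOfEquivOfLe hAK).toEquiv
    rw [h1, hAdef, Nat.card_zpowers, orderOf_pow, hm, Nat.gcd_eq_right hpαm]
  have hcardK : Nat.card K ∣ n * k := by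
    have hlag := Subgroup.card_eq_card_quotient_mul_card_subgroup A'
    rw [hcardA, hcardQ] at hlag
    rw [hlag]
    exact Nat.mul_dvd_mul_right hordπ k
  have hcardH : Nat.card (Subgroup.zpowers (a ^ k)) = p ^ α := by
    rw [Nat.card_zpowers, hordz]
  have hHK_inf : Subgroup.zpowers (a ^ k) ⊓ K = ⊥ := by
    apply Subgroup.inf_eq_bot_of_coprime
    rw [hcardH]
    have h1 : Nat.Coprime p (n * k) :=
      Nat.Coprime.mul_right (hp.coprime_iff_not_dvd.mpr hpn) (hp.coprime_iff_not_dvd.mpr hpk)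
    exact Nat.Coprime.coprime_dvd_right hcardK (h1.pow_left α)
  have hHK_sup : Subgroup.zpowers (a ^ k) ⊔ K = ⊤ := by
    rw [eq_top_iff, ← hgen, Subgroup.closure_le, Set.insert_subset_iff,
      Set.singleton_subset_iff]
    constructor
    · have hco : Nat.Coprime k (p ^ α) := ((hp.coprime_iff_not_dvd.mpr hpk).symm).pow_right α
      have bez := Nat.gcd_eq_gcd_ab k (p ^ α)
      rw [Nat.Coprime] at hco
      have hexp := bez
      rw [hco] at hexp
      push_cast at hexp
      have key : a = (a ^ k) ^ Nat.gcdA k (p ^ α) * (a ^ p ^ α) ^ Nat.gcdB k (p ^ α) := by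
        calc a = a ^ (1 : ℤ) := (zpow_one a).symm
          _ = a ^ ((k:ℤ) * Nat.gcdA k (p ^ α) + (p:ℤ)^α * Nat.gcdB k (p ^ α)) := by rw [← hexp]
          _ = a ^ ((k:ℤ) * Nat.gcdA k (p ^ α)) * a ^ ((p:ℤ)^α * Nat.gcdB k (p ^ α)) :=
              zpow_add a _ _
          _ = (a ^ (k:ℤ)) ^ Nat.gcdA k (p ^ α) * (a ^ ((p:ℤ)^α)) ^ Nat.gcdB k (p ^ α) := by
              rw [zpow_mul, zpow_mul]
          _ = (a ^ k) ^ Nat.gcdA k (p ^ α) * (a ^ p ^ α) ^ Nat.gcdB k (p ^ α) := by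
              norm_cast
      rw [SetLike.mem_coe]
      have hmem : (a ^ k) ^ Nat.gcdA k (p ^ α) * (a ^ p ^ α) ^ Nat.gcdB k (p ^ α) ∈
          Subgroup.zpowers (a ^ k) ⊔ K :=
        mul_mem (Subgroup.mem_sup_left (zpow_mem (Subgroup.mem_zpowers _) _))
          (Subgroup.mem_sup_right (zpow_mem huK _))
      rwa [← key] at hmem
    · exact Subgroup.mem_sup_right hbK
  refine ⟨Subgroup.zpowers (a ^ k), K, ?_, ?_, ?_, hKnormal, hHK_inf, hHK_sup⟩
  · intro h
    exact hzne (Subgroup.zpowers_eq_bot.mp h)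
  · intro h
    have hb1 : b = 1 := by
      rw [h] at hbK
      exact Subgroup.mem_bot.mp hbK
    exact habne (by rw [hb1, one_mul, mul_one])
  · refine ⟨fun g hg x => ?_⟩
    have hc := Subgroup.mem_center_iff.mp (hHle hg) x
    have he : x * g * x⁻¹ = g := by rw [hc]; group
    rwa [he]
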